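/- Let P = conv({(6,0), (9,6), (1,5)}) ⊆ ℝ². Then the lattice width of P equals 6: the direction v = (0,1) satisfies ℓw_{(0,1)}(P) = 6, and for every nonzero v ∈ ℤ², ℓw_v(P) ≥ 6. -/
import Mathlib


/-- The lattice width of `P ⊆ ℝ²` in the direction `v ∈ ℤ²`:
`ℓw_v(P) = sup { ⟨x,v⟩ : x ∈ P } − inf { ⟨x,v⟩ : x ∈ P }`. -/
noncomputable def latticeWidthIn {n : ℕ} (P : Set (Fin n → ℝ)) (v : Fin n → ℤ) : ℝ :=
  sSup {r : ℝ | ∃ x ∈ P, r = ∑ i, x i * (v i : ℝ)} -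
    sInf {r : ℝ | ∃ x ∈ P, r = ∑ i, x i * (v i : ℝ)}


-- helper: width formula
lemma width_formula (v : Fin 2 → ℤ) :
    latticeWidthIn (convexHull ℝ {![(6 : ℝ), 0], ![9, 6], ![1, 5]}) v =
      max (6 * (v 0 : ℝ)) (max (9 * v 0 + 6 * v 1) (v 0 + 5 * v 1)) -
      min (6 * (v 0 : ℝ)) (min (9 * v 0 + 6 * v 1) (v 0 + 5 * v 1)) := by
  set a : ℝ := 6 * (v 0 : ℝ)
  set b : ℝ := 9 * (v 0 : ℝ) + 6 * (v 1 : ℝ)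
  set c : ℝ := (v 0 : ℝ) + 5 * (v 1 : ℝ)
  set g : (Fin 2 → ℝ) →ₗ[ℝ] ℝ :=
    { toFun := fun x => ∑ i, x i * (v i : ℝ)
      map_add' := by intro x y; simp [add_mul, Finset.sum_add_distrib]
      map_smul' := by intro r x; simp [Finset.mul_sum]; ring_nf
    } with hg
  have hS : {r : ℝ | ∃ x ∈ convexHull ℝ ({![(6 : ℝ), 0], ![9, 6], ![1, 5]} : Set (Fin 2 → ℝ)),
      r = ∑ i, x i * (v i : ℝ)} =
      Set.Icc (min a (min b c)) (max a (max b c)) := by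
    have h1 : {r : ℝ | ∃ x ∈ convexHull ℝ ({![(6 : ℝ), 0], ![9, 6], ![1, 5]} : Set (Fin 2 → ℝ)),
        r = ∑ i, x i * (v i : ℝ)} = g '' (convexHull ℝ {![(6 : ℝ), 0], ![9, 6], ![1, 5]}) := by
      ext r; simp [hg, eq_comm, Set.mem_image]
    rw [h1, g.image_convexHull]
    have h2 : g '' ({![(6 : ℝ), 0], ![9, 6], ![1, 5]} : Set (Fin 2 → ℝ)) = {a, b, c} := by
      simp only [Set.image_insert_eq, Set.image_singleton, hg]
      norm_num [Fin.sum_univ_two, a, b, c]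
    rw [h2]
    apply Set.Subset.antisymm
    · apply convexHull_min _ (convex_Icc _ _)
      intro x hx
      rcases hx with h | h | h <;> subst h <;>
        constructor <;> simp [le_max_iff, min_le_iff, le_refl]
    · have hmm : min a (min b c) ≤ max a (max b c) :=
        le_trans (min_le_left _ _) (le_max_left _ _)
      rw [← segment_eq_Icc hmm, ← convexHull_pair]
      apply convexHull_mono
      intro x hx
      rcases hx with h | h <;> subst h
      · rcases le_total a (min b c) with h | h
        · simp [min_eq_left h]
        · rcases le_total b c with h2 | h2 <;> simp_all [min_def]
      · rcases le_total a (max b c) with h | h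
        · rcases le_total b c with h2 | h2 <;> simp_all [max_def]
        · simp [max_eq_left h]
  have hmm : min a (min b c) ≤ max a (max b c) :=
    le_trans (min_le_left _ _) (le_max_left _ _)
  rw [latticeWidthIn, hS, csSup_Icc hmm, csInf_Icc hmm]

/-- The triangle `P = conv {(6,0), (9,6), (1,5)} ⊆ ℝ²` has lattice width `6`:
the direction `(0,1)` realizes `ℓw_{(0,1)}(P) = 6`, and every nonzero `v ∈ ℤ²` has
`ℓw_v(P) ≥ 6`. -/
theorem latticeWidth_example_triangle
    (P : Set (Fin 2 → ℝ))
    (hP : P = convexHull ℝ {![(6 : ℝ), 0], ![9, 6], ![1, 5]}) :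
    latticeWidthIn P ![0, 1] = 6 ∧
      ∀ v : Fin 2 → ℤ, v ≠ 0 → 6 ≤ latticeWidthIn P v := by
  subst hP
  constructor
  · rw [width_formula]
    norm_num
  · intro v hv
    rw [width_formula v]
    set p : ℤ := v 0
    set q : ℤ := v 1
    have hpq : p ≠ 0 ∨ q ≠ 0 := by
      by_contra h
      push_neg at h
      exact hv (funext fun i => by fin_cases i <;> [exact h.1; exact h.2])
    set a : ℝ := 6 * (p : ℝ)
    set b : ℝ := 9 * (p : ℝ) + 6 * (q : ℝ)
    set c : ℝ := (p : ℝ) + 5 * (q : ℝ)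
    have hM1 : a ≤ max a (max b c) := le_max_left _ _
    have hM2 : b ≤ max a (max b c) := le_trans (le_max_left _ _) (le_max_right _ _)
    have hM3 : c ≤ max a (max b c) := le_trans (le_max_right _ _) (le_max_right _ _)
    have hm1 : min a (min b c) ≤ a := min_le_left _ _
    have hm2 : min a (min b c) ≤ b := le_trans (min_le_right _ _) (min_le_left _ _)
    have hm3 : min a (min b c) ≤ c := le_trans (min_le_right _ _) (min_le_right _ _)
    have key : (6 ≤ 3*p + 6*q ∨ 3*p + 6*q ≤ -6) ∨ (6 ≤ 5*q - 5*p ∨ 5*q - 5*p ≤ -6)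
        ∨ (6 ≤ 8*p + q ∨ 8*p + q ≤ -6) := by omega
    rcases key with (h | h) | (h | h) | (h | h)
    · have : (6 : ℝ) ≤ b - a := by
        have : ((3*p + 6*q : ℤ) : ℝ) = b - a := by push_cast; ring
        rw [← this]; exact_mod_cast h
      linarith
    · have : (6 : ℝ) ≤ a - b := by
        have : ((-(3*p + 6*q) : ℤ) : ℝ) = a - b := by push_cast; ring
        rw [← this]; exact_mod_cast (by omega : (6:ℤ) ≤ -(3*p + 6*q))
      linarith
    · have : (6 : ℝ) ≤ c - a := by
        have : ((5*q - 5*p : ℤ) : ℝ) = c - a := by push_cast; ring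
        rw [← this]; exact_mod_cast h
      linarith
    · have : (6 : ℝ) ≤ a - c := by
        have : ((-(5*q - 5*p) : ℤ) : ℝ) = a - c := by push_cast; ring
        rw [← this]; exact_mod_cast (by omega : (6:ℤ) ≤ -(5*q - 5*p))
      linarith
    · have : (6 : ℝ) ≤ b - c := by
        have : ((8*p + q : ℤ) : ℝ) = b - c := by push_cast; ring
        rw [← this]; exact_mod_cast h
      linarith
    · have : (6 : ℝ) ≤ c - b := by
        have : ((-(8*p + q) : ℤ) : ℝ) = c - b := by push_cast; ring
        rw [← this]; exact_mod_cast (by omega : (6:ℤ) ≤ -(8*p + q))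
      linarith
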